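/- Let L be a finite-dimensional nilpotent stem Lie algebra over a field k with dim L' = m ≥ 1. Then L is a 2-step nilpotent Camina Lie algebra if and only if L has breadth type (0, m). -/

import Mathlib

/- Common definitions: breadth, breadth type, derived subalgebra, Camina Lie algebras,
nilpotency class, minimal generation, and free nilpotent Lie algebras. -/

open Module

section Defs

variable (k : Type*) [Field k]

/-- The breadth of an element `x` of a Lie algebra: the rank of the adjoint map `ad x`
(equivalently, the codimension of the centralizer of `x`). -/
noncomputable def breadth (L : Type*) [LieRing L] [LieAlgebra k L] (x : L) : ℕ :=
  Module.finrank k (LinearMap.range (LieAlgebra.ad k L x))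

/-- A Lie algebra has breadth type `S` if `S` is exactly the set of breadths of its elements. -/
def HasBreadthType (L : Type*) [LieRing L] [LieAlgebra k L] (S : Set ℕ) : Prop :=
  Set.range (breadth k L) = S

/-- The derived subalgebra `L' = [L, L]` as a Lie ideal. -/
abbrev derivedIdeal (L : Type*) [LieRing L] [LieAlgebra k L] : LieIdeal k L :=
  ⁅(⊤ : LieIdeal k L), (⊤ : LieIdeal k L)⁆

lemma lie_mem_derivedIdeal (L : Type*) [LieRing L] [LieAlgebra k L] (x y : L) :
    ⁅x, y⁆ ∈ derivedIdeal k L :=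
  LieSubmodule.lie_mem_lie (LieSubmodule.mem_top x) (LieSubmodule.mem_top y)

/-- A Camina Lie algebra: `[x, L] = L'` for every `x ∈ L \ L'`. -/
def IsCamina (L : Type*) [LieRing L] [LieAlgebra k L] : Prop :=
  ∀ x : L, x ∉ derivedIdeal k L →
    LinearMap.range (LieAlgebra.ad k L x) = (derivedIdeal k L).toSubmodule

/-- A Lie algebra is nilpotent of class exactly `c`. -/
def IsNilpotentOfClass (L : Type*) [LieRing L] [LieAlgebra k L] (c : ℕ) : Prop :=
  LieModule.lowerCentralSeries k L L c = ⊥ ∧ ∀ b < c, LieModule.lowerCentralSeries k L L b ≠ ⊥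

/-- A Lie algebra is minimally generated by `n` elements: some `n` elements generate it
and no fewer elements generate it. -/
def MinimallyGenerated (L : Type*) [LieRing L] [LieAlgebra k L] (n : ℕ) : Prop :=
  (∃ s : Finset L, s.card = n ∧ LieSubalgebra.lieSpan k L ↑s = ⊤) ∧
  ∀ s : Finset L, LieSubalgebra.lieSpan k L ↑s = ⊤ → n ≤ s.card

/-- The free `c`-step nilpotent Lie algebra on `n` generators: the quotient of the free
Lie algebra on `n` generators by the `(c+1)`-st term `γ_{c+1}` of its lower central series. -/
abbrev FreeNilp (c n : ℕ) :=
  FreeLieAlgebra k (Fin n) ⧸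
    LieModule.lowerCentralSeries k (FreeLieAlgebra k (Fin n)) (FreeLieAlgebra k (Fin n)) c

/-- The canonical generators of the free `c`-step nilpotent Lie algebra on `n` generators. -/
noncomputable def gen (c n : ℕ) (i : Fin n) : FreeNilp k c n :=
  LieSubmodule.Quotient.mk
    (N := LieModule.lowerCentralSeries k (FreeLieAlgebra k (Fin n)) (FreeLieAlgebra k (Fin n)) c)
    (FreeLieAlgebra.of k i)

end Defs

section Aux

variable {k : Type*} [Field k] {L : Type*} [LieRing L] [LieAlgebra k L]

lemma lcs_eq_bot_of_le_succ [LieRing.IsNilpotent L] (n : ℕ)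
    (h : LieModule.lowerCentralSeries k L L n ≤ LieModule.lowerCentralSeries k L L (n + 1)) :
    LieModule.lowerCentralSeries k L L n = ⊥ := by
  have key : ∀ j, LieModule.lowerCentralSeries k L L n ≤
      LieModule.lowerCentralSeries k L L (n + j) := by
    intro j
    induction j with
    | zero => exact le_rfl
    | succ j ih =>
      refine h.trans ?_
      rw [LieModule.lowerCentralSeries_succ, show n + (j + 1) = (n + j) + 1 by ring,
        LieModule.lowerCentralSeries_succ]
      exact LieSubmodule.mono_lie_right _ ih
  obtain ⟨N, hN⟩ := LieModule.IsNilpotent.nilpotent k L L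
  refine le_bot_iff.mp ?_
  calc LieModule.lowerCentralSeries k L L n
      ≤ LieModule.lowerCentralSeries k L L (n + N) := key N
    _ ≤ LieModule.lowerCentralSeries k L L N :=
        LieModule.antitone_lowerCentralSeries k L L (Nat.le_add_left N n)
    _ = ⊥ := hN

lemma lcs_one_eq_derived :
    LieModule.lowerCentralSeries k L L 1 = derivedIdeal k L := by
  rw [LieModule.lowerCentralSeries_succ, LieModule.lowerCentralSeries_zero]

lemma range_ad_le_derived (x : L) :
    LinearMap.range (LieAlgebra.ad k L x) ≤ (derivedIdeal k L).toSubmodule := by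
  rintro y ⟨z, rfl⟩
  exact lie_mem_derivedIdeal k L x z

lemma breadth_eq_zero_iff [FiniteDimensional k L] (x : L) :
    breadth k L x = 0 ↔ x ∈ LieAlgebra.center k L := by
  rw [breadth, Submodule.finrank_eq_zero, LinearMap.range_eq_bot]
  constructor
  · intro h
    rw [LieModule.mem_maxTrivSubmodule]
    intro y
    rw [← lie_skew, neg_eq_zero, ← LieAlgebra.ad_apply (R := k), h]
    rfl
  · intro h
    ext y
    have := (LieModule.mem_maxTrivSubmodule k L L x).mp h y
    simp only [LieAlgebra.ad_apply, LinearMap.zero_apply]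
    rw [← lie_skew, this, neg_zero]

end Aux

/-- a finite-dimensional nilpotent stem Lie algebra with `dim L' = m ≥ 1` is a
2-step nilpotent Camina Lie algebra iff it has breadth type `(0, m)`. -/
theorem stem_camina_iff_breadth_type
    (k : Type*) [Field k] (L : Type*) [LieRing L] [LieAlgebra k L]
    [FiniteDimensional k L] [LieRing.IsNilpotent L]
    (hstem : LieAlgebra.center k L ≤ derivedIdeal k L)
    (m : ℕ) (hm : 1 ≤ m) (hdim : finrank k (derivedIdeal k L) = m) :
    (IsNilpotentOfClass k L 2 ∧ IsCamina k L) ↔ HasBreadthType k L {0, m} := by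
  have hfr : finrank k (derivedIdeal k L).toSubmodule = m := hdim
  have hDbot : derivedIdeal k L ≠ ⊥ := by
    intro hb
    have h0 : (derivedIdeal k L).toSubmodule = ⊥ := by simp [hb]
    have := Submodule.finrank_eq_zero.mpr h0
    omega
  constructor
  · rintro ⟨⟨h2, hlt⟩, hcam⟩
    -- every element of L' is central
    have hcentral : ∀ x ∈ derivedIdeal k L, ∀ y : L, ⁅y, x⁆ = 0 := by
      intro x hx y
      have hmem : ⁅y, x⁆ ∈ LieModule.lowerCentralSeries k L L 2 := by
        rw [LieModule.lowerCentralSeries_succ, lcs_one_eq_derived]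
        exact LieSubmodule.lie_mem_lie (LieSubmodule.mem_top y) hx
      rw [h2] at hmem
      simpa using hmem
    have hb0 : ∀ x ∈ derivedIdeal k L, breadth k L x = 0 := by
      intro x hx
      rw [breadth_eq_zero_iff]
      exact (LieModule.mem_maxTrivSubmodule k L L x).mpr fun y => hcentral x hx y
    have hbm : ∀ x : L, x ∉ derivedIdeal k L → breadth k L x = m := by
      intro x hx
      rw [breadth, hcam x hx]
      exact hfr
    -- L' ≠ ⊤
    have hDtop : derivedIdeal k L ≠ ⊤ := by
      intro htop
      have h22 : LieModule.lowerCentralSeries k L L 2 = derivedIdeal k L := by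
        rw [LieModule.lowerCentralSeries_succ, lcs_one_eq_derived, htop]
        exact htop
      exact hDbot (by rw [← h22, h2])
    obtain ⟨x, hx⟩ : ∃ x : L, x ∉ derivedIdeal k L := by
      by_contra hc
      push_neg at hc
      exact hDtop (eq_top_iff.mpr fun y _ => hc y)
    apply Set.eq_of_subset_of_subset
    · rintro n ⟨y, rfl⟩
      by_cases hy : y ∈ derivedIdeal k L
      · exact Or.inl (hb0 y hy)
      · exact Or.inr (hbm y hy)
    · rintro n (rfl | rfl)
      · exact ⟨0, hb0 0 (zero_mem _)⟩
      · exact ⟨x, hbm x hx⟩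
  · intro h
    have hall : ∀ x : L, breadth k L x = 0 ∨ breadth k L x = m := by
      intro x
      have hx : breadth k L x ∈ ({0, m} : Set ℕ) := h ▸ Set.mem_range_self x
      simpa using hx
    have hkey : ∀ x : L, x ∉ LieAlgebra.center k L →
        LinearMap.range (LieAlgebra.ad k L x) = (derivedIdeal k L).toSubmodule := by
      intro x hx
      have hb : breadth k L x = m := by
        rcases hall x with h0 | hm'
        · exact absurd ((breadth_eq_zero_iff x).mp h0) hx
        · exact hm'
      exact Submodule.eq_of_le_of_finrank_eq (range_ad_le_derived x) (hb.trans hfr.symm)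
    -- every element of L' is central
    have hcen : ∀ z ∈ derivedIdeal k L, z ∈ LieAlgebra.center k L := by
      intro z hz
      by_contra hzc
      have hr := hkey z hzc
      have hle : derivedIdeal k L ≤ LieModule.lowerCentralSeries k L L 2 := by
        intro w hw
        have hw' : w ∈ LinearMap.range (LieAlgebra.ad k L z) := by
          rw [hr]; exact hw
        obtain ⟨u, rfl⟩ := hw'
        rw [LieModule.lowerCentralSeries_succ]
        have : LieAlgebra.ad k L z u = -⁅u, z⁆ := by
          rw [LieAlgebra.ad_apply, ← lie_skew]
        rw [this]
        refine neg_mem (LieSubmodule.lie_mem_lie (LieSubmodule.mem_top u) ?_)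
        rw [lcs_one_eq_derived]
        exact hz
      have hbot1 : LieModule.lowerCentralSeries k L L 1 = ⊥ :=
        lcs_eq_bot_of_le_succ 1 (by rw [lcs_one_eq_derived]; exact hle)
      rw [lcs_one_eq_derived] at hbot1
      exact hDbot hbot1
    have hlcs2 : LieModule.lowerCentralSeries k L L 2 = ⊥ := by
      rw [LieModule.lowerCentralSeries_succ, lcs_one_eq_derived,
        LieSubmodule.lie_eq_bot_iff]
      intro y _ z hz
      exact (LieModule.mem_maxTrivSubmodule k L L z).mp (hcen z hz) y
    refine ⟨⟨hlcs2, ?_⟩, ?_⟩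
    · intro b hb
      interval_cases b
      · intro hbot
        rw [LieModule.lowerCentralSeries_zero] at hbot
        exact hDbot (le_bot_iff.mp (hbot ▸ le_top))
      · rw [lcs_one_eq_derived]
        exact hDbot
    · intro x hx
      exact hkey x fun hc => hx (hstem hc)
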